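/- Every compact convex subset K of a Hausdorff topological vector space L over ℝ is σ-convex: for every sequence (x_n)_{n∈ℕ} in K and every sequence (t_n)_{n∈ℕ} of positive reals with ∑_n t_n = 1, the series ∑_n t_n x_n converges in L to a point of K. -/

import Mathlib

open Set Filter Topology Cardinal

/-- A function is scatteredly continuous if every nonempty subset `A` of the domain
contains a point at which the restriction `f|A` is continuous. -/
def ScatCont {X Y : Type*} [TopologicalSpace X] [TopologicalSpace Y] (f : X → Y) : Prop :=
  ∀ A : Set X, A.Nonempty → ∃ a ∈ A, ContinuousWithinAt f A a

/-- A family of functions is scatteredly continuous if every nonempty subset `A` of the domain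
contains a point at which all restrictions `f|A`, `f ∈ F`, are continuous. -/
def ScatContFam {X Y : Type*} [TopologicalSpace X] [TopologicalSpace Y]
    (F : Set (X → Y)) : Prop :=
  ∀ A : Set X, A.Nonempty → ∃ a ∈ A, ∀ f ∈ F, ContinuousWithinAt f A a

/-- A function is weakly discontinuous if every subset `A` of the domain contains an
open (in `A`) dense (in `A`) subset `U` such that `f|U` is continuous. -/
def WeaklyDisc {X Y : Type*} [TopologicalSpace X] [TopologicalSpace Y] (f : X → Y) : Prop :=
  ∀ A : Set X, ∃ U : Set X, U ⊆ A ∧ (∃ V : Set X, IsOpen V ∧ U = V ∩ A) ∧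
    A ⊆ closure U ∧ ContinuousOn f U

/-- A family of functions is weakly discontinuous if every subset `A` of the domain contains an
open (in `A`) dense (in `A`) subset `U` such that every `f|U`, `f ∈ F`, is continuous. -/
def WeaklyDiscFam {X Y : Type*} [TopologicalSpace X] [TopologicalSpace Y]
    (F : Set (X → Y)) : Prop :=
  ∀ A : Set X, ∃ U : Set X, U ⊆ A ∧ (∃ V : Set X, IsOpen V ∧ U = V ∩ A) ∧
    A ⊆ closure U ∧ ∀ f ∈ F, ContinuousOn f U

/-- The decomposition number of a family `F` of functions: the smallest cardinality of a
cover `𝒞` of `X` such that every `f ∈ F` restricted to every `C ∈ 𝒞` is continuous. -/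
noncomputable def Dec {X Y : Type*} [TopologicalSpace X] [TopologicalSpace Y]
    (F : Set (X → Y)) : Cardinal :=
  sInf { c : Cardinal | ∃ 𝒞 : Set (Set X), c = #𝒞 ∧ ⋃₀ 𝒞 = Set.univ ∧
    ∀ C ∈ 𝒞, ∀ f ∈ F, ContinuousOn f C }

/-- The Lindelöf number: the smallest infinite cardinal `κ` such that every open cover
has a subcover of cardinality `≤ κ`. -/
noncomputable def lindelofNum (X : Type*) [TopologicalSpace X] : Cardinal :=
  sInf { κ : Cardinal | Cardinal.aleph0 ≤ κ ∧ ∀ 𝒰 : Set (Set X), (∀ U ∈ 𝒰, IsOpen U) →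
    ⋃₀ 𝒰 = Set.univ → ∃ 𝒱 ⊆ 𝒰, #𝒱 ≤ κ ∧ ⋃₀ 𝒱 = Set.univ }

/-- The hereditary Lindelöf number: the supremum of the Lindelöf numbers of all subspaces. -/
noncomputable def heredLindelofNum (X : Type*) [TopologicalSpace X] : Cardinal :=
  ⨆ Z : Set X, lindelofNum Z

/-- A network for a topological space: a family of (arbitrary) sets such that every open
neighbourhood of every point contains a member of the family containing that point. -/
def IsNetwork {X : Type*} [TopologicalSpace X] (N : Set (Set X)) : Prop :=
  ∀ (x : X) (U : Set X), IsOpen U → x ∈ U → ∃ n ∈ N, x ∈ n ∧ n ⊆ U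

/-- The network weight: the smallest infinite cardinality of a network. -/
noncomputable def netWt (X : Type*) [TopologicalSpace X] : Cardinal :=
  sInf { c : Cardinal | ∃ N : Set (Set X), IsNetwork N ∧ c = max #N Cardinal.aleph0 }

/-- The weight: the smallest infinite cardinality of a base of the topology. -/
noncomputable def wt (X : Type*) [TopologicalSpace X] : Cardinal :=
  sInf { c : Cardinal | ∃ B : Set (Set X), TopologicalSpace.IsTopologicalBasis B ∧
    c = max #B Cardinal.aleph0 }

/-- The density: the smallest cardinality of a dense subset. -/
noncomputable def dens (X : Type*) [TopologicalSpace X] : Cardinal :=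
  sInf { c : Cardinal | ∃ D : Set X, Dense D ∧ c = #D }

/-- The hereditary density: the supremum of densities of all subspaces. -/
noncomputable def heredDens (X : Type*) [TopologicalSpace X] : Cardinal :=
  ⨆ Z : Set X, dens Z

/-- The spread: the supremum of cardinalities of discrete subspaces. -/
noncomputable def spread (X : Type*) [TopologicalSpace X] : Cardinal :=
  sSup { c : Cardinal | ∃ D : Set X, DiscreteTopology D ∧ c = #D }

/-- A subset `C` of a topological vector space over `ℝ` is σ-convex if for every sequence
`(x n)` in `C` and every sequence `(t n)` of positive reals with `∑ n, t n = 1`, the series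
`∑ n, t n • x n` converges to a point of `C`. -/
def SigmaConvex {L : Type*} [AddCommGroup L] [Module ℝ L] [TopologicalSpace L]
    (C : Set L) : Prop :=
  ∀ (x : ℕ → L) (t : ℕ → ℝ), (∀ n, x n ∈ C) → (∀ n, 0 < t n) →
    Tendsto (fun N => ∑ n ∈ Finset.range N, t n) atTop (𝓝 1) →
    ∃ c ∈ C, Tendsto (fun N => ∑ n ∈ Finset.range N, t n • x n) atTop (𝓝 c)

/-- A topological space has countable tightness if every point in the closure of a set `A`
lies in the closure of a countable subset of `A`. -/
def CountablyTight (X : Type*) [TopologicalSpace X] : Prop :=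
  ∀ (A : Set X) (a : X), a ∈ closure A → ∃ B ⊆ A, B.Countable ∧ a ∈ closure B

/-- Every compact convex subset `K` of a Hausdorff topological vector space `L` over `ℝ`
is σ-convex. -/
theorem stmt17 {L : Type*} [AddCommGroup L] [Module ℝ L] [TopologicalSpace L] [T2Space L]
    [IsTopologicalAddGroup L] [ContinuousSMul ℝ L]
    (K : Set L) (hcomp : IsCompact K) (hconv : Convex ℝ K) :
    SigmaConvex K := by
  intro x t hx ht hsum
  set T : ℕ → ℝ := fun N => ∑ n ∈ Finset.range N, t n with hTdef
  set S : ℕ → L := fun N => ∑ n ∈ Finset.range N, t n • x n with hSdef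
  have hTmono : Monotone T := fun a b hab =>
    Finset.sum_le_sum_of_subset_of_nonneg (Finset.range_subset_range.2 hab)
      (fun i _ _ => (ht i).le)
  have hTnonneg : ∀ N, 0 ≤ T N := fun N => Finset.sum_nonneg fun i _ => (ht i).le
  have hTle : ∀ N, T N ≤ 1 := fun N =>
    ge_of_tendsto hsum (eventually_atTop.2 ⟨N, fun M hM => hTmono hM⟩)
  -- key decomposition lemma
  have key : ∀ N M, N ≤ M → ∃ k ∈ K, S M - S N = (T M - T N) • k := by
    intro N M hNM
    rcases eq_or_lt_of_le hNM with rfl | h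
    · exact ⟨x 0, hx 0, by simp⟩
    · have hIco : (Finset.Ico N M).Nonempty := by
        rw [Finset.nonempty_Ico]; exact h
      have hdiffT : T M - T N = ∑ n ∈ Finset.Ico N M, t n := by
        rw [hTdef]; exact (Finset.sum_Ico_eq_sub _ hNM).symm
      have hd : 0 < T M - T N := by
        rw [hdiffT]; exact Finset.sum_pos (fun i _ => ht i) hIco
      set d := T M - T N with hddef
      have hSdiff : S M - S N = ∑ n ∈ Finset.Ico N M, t n • x n := by
        rw [hSdef]; exact (Finset.sum_Ico_eq_sub _ hNM).symm
      refine ⟨d⁻¹ • (S M - S N), ?_, (smul_inv_smul₀ hd.ne' _).symm⟩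
      have hmem := hconv.sum_mem (t := Finset.Ico N M) (w := fun n => d⁻¹ * t n)
        (z := x) (fun i _ => mul_nonneg (inv_nonneg.2 hd.le) (ht i).le)
        (by rw [← Finset.mul_sum, ← hdiffT, inv_mul_cancel₀ hd.ne'])
        (fun i _ => hx i)
      have : ∑ i ∈ Finset.Ico N M, (d⁻¹ * t i) • x i = d⁻¹ • (S M - S N) := by
        rw [hSdiff, Finset.smul_sum]
        simp [mul_smul]
      rwa [this] at hmem
  have hS0 : ∀ N, ∃ k ∈ K, S N = T N • k := by
    intro N
    obtain ⟨k, hk, hkeq⟩ := key 0 N (Nat.zero_le N)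
    refine ⟨k, hk, ?_⟩
    simpa [hSdef, hTdef] using hkeq
  -- compact superset containing all partial sums
  set C : Set L := (fun p : ℝ × L => p.1 • p.2) '' (Set.Icc (0:ℝ) 1 ×ˢ K) with hCdef
  have hCcomp : IsCompact C :=
    (isCompact_Icc.prod hcomp).image (continuous_fst.smul continuous_snd)
  have hmemC : ∀ N, S N ∈ C := by
    intro N
    obtain ⟨k, hk, hkeq⟩ := hS0 N
    exact ⟨(T N, k), ⟨⟨hTnonneg N, hTle N⟩, hk⟩, hkeq.symm⟩
  have hle : Filter.map S Filter.atTop ≤ 𝓟 C :=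
    le_principal_iff.2 (mem_map.2 (Eventually.of_forall hmemC))
  obtain ⟨y, hyC, hy⟩ := hCcomp.exists_clusterPt hle
  have hfreq : ∀ s ∈ 𝓝 y, ∃ᶠ N in atTop, S N ∈ s := mapClusterPt_iff_frequently.1 hy
  -- main convergence
  have hS : Tendsto S atTop (𝓝 y) := by
    rw [Filter.tendsto_def]
    intro U hU
    -- U₀: translate of U to 0
    have hU₀ : (· + y) ⁻¹' U ∈ 𝓝 (0 : L) := by
      have : ContinuousAt (· + y) (0 : L) := (continuous_id.add continuous_const).continuousAt
      have := this.preimage_mem_nhds (by simpa using hU)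
      simpa using this
    obtain ⟨V, hV, hVhalf⟩ := exists_nhds_zero_half hU₀
    -- small multiples of K lie in V
    have hsmall : ∃ δ > (0:ℝ), ∀ d : ℝ, 0 ≤ d → d < δ → ∀ k ∈ K, d • k ∈ V := by
      have h0 : ({(0:ℝ)} ×ˢ K) ⊆ (fun p : ℝ × L => p.1 • p.2) ⁻¹' interior V := by
        rintro ⟨s, k⟩ ⟨hs, hk⟩
        simp only [Set.mem_singleton_iff] at hs
        subst hs
        simp [Set.mem_preimage, mem_interior_iff_mem_nhds.2 hV]
      obtain ⟨u, v, hu, hv, h0u, hKv, huv⟩ :=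
        generalized_tube_lemma isCompact_singleton hcomp
          (isOpen_interior.preimage (continuous_fst.smul continuous_snd)) h0
      have hunhds : u ∈ 𝓝 (0:ℝ) := hu.mem_nhds (h0u rfl)
      obtain ⟨δ, hδpos, hδ⟩ := Metric.mem_nhds_iff.1 hunhds
      refine ⟨δ, hδpos, fun d hd0 hdδ k hk => ?_⟩
      have : (d, k) ∈ u ×ˢ v := ⟨hδ (by simpa [abs_of_nonneg hd0] using hdδ), hKv hk⟩
      exact interior_subset (huv this)
    obtain ⟨δ, hδpos, hδ⟩ := hsmall
    -- W: translate of V at y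
    have hW : {z : L | z - y ∈ V} ∈ 𝓝 y := by
      have : ContinuousAt (· - y) y := (continuous_id.sub continuous_const).continuousAt
      have := this.preimage_mem_nhds (by simpa using hV)
      exact this
    have hev : ∀ᶠ N in atTop, 1 - δ < T N :=
      hsum.eventually (eventually_gt_nhds (by linarith))
    obtain ⟨N₀, hN₀W, hN₀T⟩ := ((hfreq _ hW).and_eventually hev).exists
    filter_upwards [eventually_ge_atTop N₀] with M hM
    obtain ⟨k, hk, hkeq⟩ := key N₀ M hM
    have hdmem : (T M - T N₀) • k ∈ V := by
      refine hδ _ (by linarith [hTmono hM] : (0:ℝ) ≤ T M - T N₀) ?_ k hk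
      have := hTle M
      linarith
    have := hVhalf _ hdmem _ hN₀W
    have heq : S M - S N₀ + (S N₀ - y) + y = S M := by abel
    rw [← hkeq] at this
    simpa [heq] using this
  -- y ∈ K
  have hTpos : ∀ N, 1 ≤ N → 0 < T N := by
    intro N hN
    exact Finset.sum_pos (fun i _ => ht i) (by simp [Finset.nonempty_range_iff]; omega)
  have hg : Tendsto (fun N => (T N)⁻¹ • S N) atTop (𝓝 y) := by
    have := ((hsum.inv₀ one_ne_zero).smul hS)
    simpa using this
  have hgK : ∀ᶠ N in atTop, (T N)⁻¹ • S N ∈ K := by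
    filter_upwards [eventually_ge_atTop 1] with N hN
    obtain ⟨k, hk, hkeq⟩ := hS0 N
    rw [hkeq, inv_smul_smul₀ (hTpos N hN).ne']
    exact hk
  exact ⟨y, hcomp.isClosed.mem_of_tendsto hg hgK, hS⟩
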